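/- For every scoring matrix γ, the extended edit distance satisfies the triangle inequality unconditionally: edist_γ(s,u) ≤ edist_γ(s,t) + edist_γ(t,u) for all s,t,u ∈ Σ*. -/

import Mathlib

open List

/-- A scoring matrix on alphabet `σ`; `none` represents the space symbol `‐`.
The value at `(none, none)` is irrelevant (never used on admissible columns). -/
abbrev Scoring (σ : Type*) := Option σ → Option σ → ℝ

/-- `A` is an alignment of the sequences `s` and `t`: a list of columns over
`Σ₋ × Σ₋` with no column `(‐,‐)`, whose first (resp. second) components with
spaces removed spell `s` (resp. `t`). -/
def IsAlignment {σ : Type*} (A : List (Option σ × Option σ)) (s t : List σ) : Prop :=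
  (∀ c ∈ A, c ≠ ((none : Option σ), (none : Option σ))) ∧
  A.filterMap Prod.fst = s ∧ A.filterMap Prod.snd = t

/-- The score of an alignment: the sum of `γ` over its columns. -/
def alignScore {σ : Type*} (γ : Scoring σ) (A : List (Option σ × Option σ)) : ℝ :=
  (A.map fun c => γ c.1 c.2).sum

/-- The weighted edit distance: minimum alignment score. -/
noncomputable def editDist {σ : Type*} (γ : Scoring σ) (s t : List σ) : ℝ :=
  sInf {x | ∃ A, IsAlignment A s t ∧ alignScore γ A = x}

/-- The normalized edit distance: minimum normalized alignment score
(score divided by number of columns); for `s = t = ε` it is `0`. -/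
noncomputable def ndist {σ : Type*} (γ : Scoring σ) (s t : List σ) : ℝ :=
  sInf {x | ∃ A, IsAlignment A s t ∧ alignScore γ A / (A.length : ℝ) = x}

/-- A walk in the digraph `D(γ)`: a list of vertices of `Σ₋` in which the
space `‐` never follows the space. -/
def IsWalkSeq {σ : Type*} (W : List (Option σ)) : Prop :=
  W.Chain' (fun a b => ¬(a = none ∧ b = none))

/-- The weight of a walk: the sum of the weights of its consecutive arcs. -/
def walkWeight {σ : Type*} (γ : Scoring σ) (W : List (Option σ)) : ℝ :=
  ((W.zip W.tail).map fun p => γ p.1 p.2).sum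

/-- `D(γ)` has a cycle of negative total weight (cycles start and end at a
vertex of `Σ`). -/
def HasNegCycle {σ : Type*} (γ : Scoring σ) : Prop :=
  ∃ (a : σ) (W : List (Option σ)),
    IsWalkSeq (some a :: (W ++ [some a])) ∧
    walkWeight γ (some a :: (W ++ [some a])) < 0

/-- The shortest-walk distance from `x` to `y` in `D(γ)`. -/
noncomputable def walkDist {σ : Type*} (γ : Scoring σ) (x y : Option σ) : ℝ :=
  sInf {w | ∃ W : List (Option σ), IsWalkSeq W ∧ W.head? = some x ∧
    W.getLast? = some y ∧ walkWeight γ W = w}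

/-- A column of an extended alignment: a nonempty sequence over `Σ₋`, with at
least one non-space symbol, no two consecutive spaces, and not having a space
at both ends. -/
def IsExtCol {σ : Type*} (c : List (Option σ)) : Prop :=
  c ≠ [] ∧ (∃ x ∈ c, x ≠ none) ∧
  c.Chain' (fun a b => ¬(a = none ∧ b = none)) ∧
  ¬(c.head? = some none ∧ c.getLast? = some none)

/-- An extended alignment of `s, t`: a list of admissible columns whose first
symbols (spaces removed) spell `s` and whose last symbols spell `t`. -/
def IsExtAlignment {σ : Type*} (E : List (List (Option σ))) (s t : List σ) : Prop :=
  (∀ c ∈ E, IsExtCol c) ∧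
  E.filterMap (fun c => c.head?.bind id) = s ∧
  E.filterMap (fun c => c.getLast?.bind id) = t

/-- The extended edit distance: minimum total score over extended alignments,
where the score of a column is the sum of `γ` over its consecutive pairs. -/
noncomputable def edist {σ : Type*} (γ : Scoring σ) (s t : List σ) : ℝ :=
  sInf {x | ∃ E, IsExtAlignment E s t ∧ (E.map (walkWeight γ)).sum = x}

section Aux
open List

variable {σ : Type*}

/-- shorthand for the no-two-spaces relation -/
abbrev Rnn (σ : Type*) : Option σ → Option σ → Prop := fun a b => ¬(a = none ∧ b = none)

/-- head symbol of a column -/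
abbrev hdc (c : List (Option σ)) : Option σ := c.head?.bind id
/-- last symbol of a column -/
abbrev lsc (c : List (Option σ)) : Option σ := c.getLast?.bind id

def ScoreSet (γ : Scoring σ) (s t : List σ) : Set ℝ :=
  {x | ∃ E, IsExtAlignment E s t ∧ (E.map (walkWeight γ)).sum = x}

lemma edist_eq (γ : Scoring σ) (s t : List σ) : edist γ s t = sInf (ScoreSet γ s t) := rfl

def NegCyc (γ : Scoring σ) : Prop :=
  ∃ (z : Option σ) (v : List (Option σ)),
    (z :: v ++ [z]).Chain' (Rnn σ) ∧ walkWeight γ (z :: v ++ [z]) < 0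

lemma walkWeight_nil (γ : Scoring σ) : walkWeight γ [] = 0 := rfl

lemma walkWeight_singleton (γ : Scoring σ) (x : Option σ) : walkWeight γ [x] = 0 := rfl

lemma walkWeight_cons_cons (γ : Scoring σ) (a b : Option σ) (l : List (Option σ)) :
    walkWeight γ (a :: b :: l) = γ a b + walkWeight γ (b :: l) := by
  simp [walkWeight, List.zip_cons_cons]

lemma walkWeight_append_cons (γ : Scoring σ) (x : Option σ) :
    ∀ (L M : List (Option σ)),
      walkWeight γ (L ++ x :: M) = walkWeight γ (L ++ [x]) + walkWeight γ (x :: M)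
  | [], M => by simp [walkWeight_singleton]
  | [a], M => by
      simp only [List.cons_append, List.nil_append, walkWeight_cons_cons,
        walkWeight_singleton]
      ring
  | a :: b :: L, M => by
      have ih := walkWeight_append_cons γ x (b :: L) M
      simp only [List.cons_append] at *
      rw [walkWeight_cons_cons, walkWeight_cons_cons γ a b (L ++ [x]), ih]
      ring

end Aux

section Aux2
open List

variable {σ : Type*}

lemma head?_eq_hdc {c : List (Option σ)} (hc : c ≠ []) : c.head? = some (hdc c) := by
  cases c with
  | nil => exact absurd rfl hc
  | cons a l => simp [hdc]

lemma getLast?_eq_lsc {c : List (Option σ)} (hc : c ≠ []) : c.getLast? = some (lsc c) := by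
  cases hg : c.getLast? with
  | none => exact absurd (List.getLast?_eq_none_iff.mp hg) hc
  | some g => simp [lsc, hg]

lemma isExtCol_left (b : σ) : IsExtCol [some b, none] := by
  refine ⟨by simp, ⟨some b, by simp⟩, ?_, by simp⟩
  simp [List.Chain', List.isChain_cons_cons]

lemma isExtCol_right (b : σ) : IsExtCol [none, some b] := by
  refine ⟨by simp, ⟨some b, by simp⟩, ?_, by simp⟩
  simp [List.Chain', List.isChain_cons_cons]

lemma spell_left_hd (x : List σ) :
    (x.map fun b => [some b, none]).filterMap (fun c => c.head?.bind id) = x := by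
  rw [List.filterMap_map]
  have : ((fun c : List (Option σ) => c.head?.bind id) ∘ fun b : σ => [some b, none])
      = fun b : σ => some b := by funext b; rfl
  rw [this]
  simp

lemma spell_left_ls (x : List σ) :
    (x.map fun b => [some b, none]).filterMap (fun c => c.getLast?.bind id) = [] := by
  rw [List.filterMap_map]
  simp [Function.comp]

lemma spell_right_hd (x : List σ) :
    (x.map fun b => [none, some b]).filterMap (fun c => c.head?.bind id) = [] := by
  rw [List.filterMap_map]
  simp [Function.comp]

lemma spell_right_ls (x : List σ) :
    (x.map fun b => [none, some b]).filterMap (fun c => c.getLast?.bind id) = x := by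
  rw [List.filterMap_map]
  have : ((fun c : List (Option σ) => c.getLast?.bind id) ∘ fun b : σ => [none, some b])
      = fun b : σ => some b := by funext b; rfl
  rw [this]
  simp

lemma trivAlign (s t : List σ) :
    IsExtAlignment ((s.map fun b => [some b, none]) ++ (t.map fun b => [none, some b])) s t := by
  refine ⟨?_, ?_, ?_⟩
  · intro c hc
    rcases List.mem_append.mp hc with h | h <;> rcases List.mem_map.mp h with ⟨b, _, rfl⟩
    · exact isExtCol_left b
    · exact isExtCol_right b
  · rw [List.filterMap_append, spell_left_hd, spell_right_hd, List.append_nil]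
  · rw [List.filterMap_append, spell_left_ls, spell_right_ls, List.nil_append]

lemma ScoreSet_nonempty (γ : Scoring σ) (s t : List σ) : (ScoreSet γ s t).Nonempty :=
  ⟨_, _, trivAlign s t, rfl⟩

/-- Composition of extended alignments, giving quasi-columns. -/
lemma comp (γ : Scoring σ) : ∀ (n : ℕ) (E₁ E₂ : List (List (Option σ))),
    E₁.length + E₂.length ≤ n →
    (∀ c ∈ E₁, IsExtCol c) → (∀ c ∈ E₂, IsExtCol c) →
    E₁.filterMap lsc = E₂.filterMap hdc →
    ∃ E : List (List (Option σ)),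
      (∀ c ∈ E, c ≠ [] ∧ (∃ x ∈ c, x ≠ none) ∧ c.Chain' (Rnn σ)) ∧
      E.filterMap hdc = E₁.filterMap hdc ∧
      E.filterMap lsc = E₂.filterMap lsc ∧
      (E.map (walkWeight γ)).sum = (E₁.map (walkWeight γ)).sum + (E₂.map (walkWeight γ)).sum := by
  intro n
  induction n with
  | zero =>
    intro E₁ E₂ hn h₁ h₂ hm
    have : E₁ = [] ∧ E₂ = [] :=
      ⟨List.length_eq_zero_iff.mp (by omega), List.length_eq_zero_iff.mp (by omega)⟩
    rcases this with ⟨rfl, rfl⟩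
    exact ⟨[], by simp, rfl, rfl, by simp⟩
  | succ n ih =>
    intro E₁ E₂ hn h₁ h₂ hm
    cases E₁ with
    | nil =>
      refine ⟨E₂, fun c hc => ⟨(h₂ c hc).1, (h₂ c hc).2.1, (h₂ c hc).2.2.1⟩, ?_, rfl, by simp⟩
      simp only [List.filterMap_nil] at hm ⊢
      exact hm.symm
    | cons c E₁ =>
      have hc0 : c ≠ [] := (h₁ c (List.mem_cons_self)).1
      rcases hl : lsc c with _ | a
      · -- last of c is a space: keep c
        obtain ⟨E, hE, hh, hl2, hs⟩ := ih E₁ E₂ (by simp at hn ⊢; omega)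
          (fun x hx => h₁ x (List.mem_cons_of_mem _ hx)) h₂
          (by simpa only [List.filterMap_cons, hl] using hm)
        refine ⟨c :: E, ?_, ?_, ?_, ?_⟩
        · intro x hx
          rcases List.mem_cons.mp hx with rfl | hx
          · exact ⟨(h₁ x (List.mem_cons_self)).1, (h₁ x (List.mem_cons_self)).2.1,
              (h₁ x (List.mem_cons_self)).2.2.1⟩
          · exact hE x hx
        · simp only [List.filterMap_cons, hh]
        · simp only [List.filterMap_cons, hl, hl2]
        · simp only [List.map_cons, List.sum_cons, hs]; ring
      · -- last of c is a letter `a`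
        cases E₂ with
        | nil =>
          simp only [List.filterMap_cons, hl, List.filterMap_nil] at hm
          exact absurd hm (List.cons_ne_nil _ _)
        | cons d E₂ =>
          have hd0 : d ≠ [] := (h₂ d (List.mem_cons_self)).1
          rcases hd : hdc d with _ | b
          · -- head of d is a space: keep d
            obtain ⟨E, hE, hh, hl2, hs⟩ := ih (c :: E₁) E₂ (by simp at hn ⊢; omega) h₁
              (fun x hx => h₂ x (List.mem_cons_of_mem _ hx))
              (by simpa only [List.filterMap_cons, hd] using hm)
            refine ⟨d :: E, ?_, ?_, ?_, ?_⟩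
            · intro x hx
              rcases List.mem_cons.mp hx with rfl | hx
              · exact ⟨(h₂ x (List.mem_cons_self)).1, (h₂ x (List.mem_cons_self)).2.1,
                  (h₂ x (List.mem_cons_self)).2.2.1⟩
              · exact hE x hx
            · simp only [List.filterMap_cons, hd, hh]
            · simp only [List.filterMap_cons, hl2]
            · simp only [List.map_cons, List.sum_cons, hs]; ring
          · -- heads match: merge c and d
            simp only [List.filterMap_cons, hl, hd] at hm
            injection hm with hab hm'
            subst hab
            obtain ⟨E, hE, hh, hl2, hs⟩ := ih E₁ E₂ (by simp at hn ⊢; omega)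
              (fun x hx => h₁ x (List.mem_cons_of_mem _ hx))
              (fun x hx => h₂ x (List.mem_cons_of_mem _ hx)) hm'
            have hcl : c.getLast? = some (some a) := by rw [getLast?_eq_lsc hc0, hl]
            have hdh : d.head? = some (some a) := by rw [head?_eq_hdc hd0, hd]
            have hdd : some a :: d.tail = d := List.cons_head?_tail hdh
            have hcd : c.dropLast ++ [some a] = c :=
              List.dropLast_append_getLast? (some a) hcl
            refine ⟨(c ++ d.tail) :: E, ?_, ?_, ?_, ?_⟩
            · intro x hx
              rcases List.mem_cons.mp hx with rfl | hx
              · refine ⟨by simp [hc0], ?_, ?_⟩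
                · obtain ⟨y, hy, hyn⟩ := (h₁ c (List.mem_cons_self)).2.1
                  exact ⟨y, List.mem_append_left _ hy, hyn⟩
                · refine List.isChain_append.mpr ⟨(h₁ c (List.mem_cons_self)).2.2.1, ?_, ?_⟩
                  · have := (h₂ d (List.mem_cons_self)).2.2.1
                    rw [← hdd] at this
                    exact this.tail
                  · intro x hx y hy
                    rw [hcl] at hx
                    simp only [Option.mem_def, Option.some.injEq] at hx
                    subst hx
                    simp [Rnn]
              · exact hE x hx
            · have : (c ++ d.tail).head? = c.head? := by
                rw [List.head?_append, head?_eq_hdc hc0]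
                rfl
              simp only [List.filterMap_cons]
              have h2 : hdc (c ++ d.tail) = hdc c := by
                show (c ++ d.tail).head?.bind id = c.head?.bind id
                rw [this]
              rw [h2, hh]
            · have hgl : (c ++ d.tail).getLast? = d.getLast? := by
                conv_rhs => rw [← hdd]
                rw [List.getLast?_append, hcl, List.getLast?_cons]
                cases d.tail.getLast? <;> rfl
              have h2 : lsc (c ++ d.tail) = lsc d := by
                show (c ++ d.tail).getLast?.bind id = d.getLast?.bind id
                rw [hgl]
              simp only [List.filterMap_cons, h2, hl2]
            · have hw : walkWeight γ (c ++ d.tail) = walkWeight γ c + walkWeight γ d := by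
                conv_lhs => rw [← hcd, List.append_assoc]
                rw [List.singleton_append, walkWeight_append_cons, hcd, hdd]
              simp only [List.map_cons, List.sum_cons, hs, hw]; ring

end Aux2

section Aux3
open List

variable {σ : Type*}

lemma noneg_walk {γ : Scoring σ} (hC : ¬ NegCyc γ) {z : Option σ} {v : List (Option σ)}
    (h : (z :: v ++ [z]).Chain' (Rnn σ)) : 0 ≤ walkWeight γ (z :: v ++ [z]) := by
  by_contra h'
  exact hC ⟨z, v, h, by linarith⟩

/-- Drop the bad (space-to-space) quasi-columns; possible when no negative cycle. -/
lemma drop_bad {γ : Scoring σ} (hC : ¬ NegCyc γ) :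
    ∀ E : List (List (Option σ)),
    (∀ c ∈ E, c ≠ [] ∧ (∃ x ∈ c, x ≠ none) ∧ c.Chain' (Rnn σ)) →
    ∃ E' : List (List (Option σ)),
      (∀ c ∈ E', IsExtCol c) ∧
      E'.filterMap hdc = E.filterMap hdc ∧
      E'.filterMap lsc = E.filterMap lsc ∧
      (E'.map (walkWeight γ)).sum ≤ (E.map (walkWeight γ)).sum
  | [], _ => ⟨[], by simp, rfl, rfl, le_refl _⟩
  | c :: E, h => by
    obtain ⟨E', h1, h2, h3, h4⟩ := drop_bad hC E (fun x hx => h x (List.mem_cons_of_mem _ hx))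
    obtain ⟨hc0, hsome, hch⟩ := h c (List.mem_cons_self)
    by_cases hbad : c.head? = some none ∧ c.getLast? = some none
    · -- bad column: nonnegative weight, drop it
      have hhd : hdc c = none := by
        show c.head?.bind id = none
        rw [hbad.1]; rfl
      have hls : lsc c = none := by
        show c.getLast?.bind id = none
        rw [hbad.2]; rfl
      obtain ⟨tl, htl⟩ : ∃ tl, c = none :: tl := ⟨c.tail, (List.cons_head?_tail hbad.1).symm⟩
      have htl0 : tl ≠ [] := by
        rintro rfl
        obtain ⟨x, hx, hxn⟩ := hsome
        rw [htl] at hx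
        simp at hx
        exact hxn hx
      have hlast : tl.getLast? = some none := by
        cases hg : tl.getLast? with
        | none => exact absurd (List.getLast?_eq_none_iff.mp hg) htl0
        | some g =>
          have h2 := hbad.2
          rw [htl, List.getLast?_cons, hg] at h2
          simp at h2
          rw [h2]
      have hdec : tl.dropLast ++ [none] = tl := List.dropLast_append_getLast? none hlast
      have hw : 0 ≤ walkWeight γ c := by
        have hc' : c = (none : Option σ) :: tl.dropLast ++ [none] := by
          rw [htl]
          conv_lhs => rw [← hdec]
          rw [← List.cons_append]
        rw [hc']
        refine noneg_walk hC ?_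
        rw [← hc']
        exact hch
      refine ⟨E', h1, ?_, ?_, ?_⟩
      · simp only [List.filterMap_cons, hhd]; exact h2
      · simp only [List.filterMap_cons, hls]; exact h3
      · simp only [List.map_cons, List.sum_cons]; linarith
    · -- good column: keep it
      refine ⟨c :: E', ?_, ?_, ?_, ?_⟩
      · intro x hx
        rcases List.mem_cons.mp hx with rfl | hx
        · exact ⟨hc0, hsome, hch, hbad⟩
        · exact h1 x hx
      · simp only [List.filterMap_cons, h2]
      · simp only [List.filterMap_cons, h3]
      · simp only [List.map_cons, List.sum_cons]; linarith

lemma sum_ge {M : ℝ} : ∀ (l : List ℝ), (∀ x ∈ l, -M ≤ x) → -((l.length : ℝ) * M) ≤ l.sum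
  | [], _ => by simp
  | a :: l, h => by
    have ih := sum_ge l (fun x hx => h x (List.mem_cons_of_mem _ hx))
    have ha := h a (List.mem_cons_self)
    simp only [List.length_cons, List.sum_cons]
    push_cast
    linarith

lemma exists_dup {α : Type*} : ∀ (l : List α), ¬ l.Nodup →
    ∃ (x : α) (l1 l2 l3 : List α), l = l1 ++ x :: l2 ++ x :: l3
  | [], h => absurd List.nodup_nil h
  | a :: l, h => by
    by_cases ha : a ∈ l
    · obtain ⟨s, t, rfl⟩ := List.append_of_mem ha
      exact ⟨a, [], s, t, rfl⟩
    · have hnd : ¬ l.Nodup := fun hn => h (List.nodup_cons.mpr ⟨ha, hn⟩)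
      obtain ⟨x, l1, l2, l3, hl⟩ := exists_dup l hnd
      exact ⟨x, a :: l1, l2, l3, by rw [hl]; rfl⟩

lemma walk_lb [Fintype σ] {γ : Scoring σ} (hC : ¬ NegCyc γ) {M : ℝ} (hM0 : 0 ≤ M)
    (hM : ∀ p q : Option σ, -M ≤ γ p q) :
    ∀ (n : ℕ) (W : List (Option σ)), W.length ≤ n → W.Chain' (Rnn σ) →
      -(((Fintype.card σ : ℝ) + 2) * M) ≤ walkWeight γ W := by
  intro n
  induction n with
  | zero =>
    intro W hW _
    have : W = [] := List.length_eq_zero_iff.mp (Nat.le_zero.mp hW)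
    subst this
    rw [walkWeight_nil]
    have : (0:ℝ) ≤ ((Fintype.card σ : ℝ) + 2) * M := by positivity
    linarith
  | succ n ihn =>
    intro W hW hch
    by_cases hnd : W.Nodup
    · have hlen : W.length ≤ Fintype.card σ + 1 := by
        have := hnd.length_le_card
        rwa [Fintype.card_option] at this
      have hzlen : ((W.zip W.tail).map fun p => γ p.1 p.2).length ≤ Fintype.card σ + 2 := by
        rw [List.length_map, List.length_zip]
        omega
      have hsum := sum_ge ((W.zip W.tail).map fun p => γ p.1 p.2) (fun x hx => by
        obtain ⟨p, _, rfl⟩ := List.mem_map.mp hx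
        exact hM _ _)
      have hmul : (((W.zip W.tail).map fun p => γ p.1 p.2).length : ℝ) * M
          ≤ ((Fintype.card σ : ℝ) + 2) * M := by
        apply mul_le_mul_of_nonneg_right _ hM0
        exact_mod_cast hzlen
      show -(((Fintype.card σ : ℝ) + 2) * M) ≤ ((W.zip W.tail).map fun p => γ p.1 p.2).sum
      linarith
    · obtain ⟨x, l1, l2, l3, rfl⟩ := exists_dup _ hnd
      have hsplit : walkWeight γ (l1 ++ x :: l2 ++ x :: l3)
          = walkWeight γ (l1 ++ [x]) + (walkWeight γ (x :: l2 ++ [x]) + walkWeight γ (x :: l3)) := by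
        rw [walkWeight_append_cons γ x (l1 ++ x :: l2) l3]
        have h1 : (l1 ++ x :: l2) ++ [x] = l1 ++ x :: (l2 ++ [x]) := by
          rw [List.append_assoc]; rfl
        rw [h1, walkWeight_append_cons γ x l1 (l2 ++ [x])]
        have h2 : (x :: l2) ++ [x] = x :: (l2 ++ [x]) := by rw [List.cons_append]
        rw [h2]
        ring
      have hmid : 0 ≤ walkWeight γ (x :: l2 ++ [x]) := noneg_walk hC (by
        refine hch.infix ?_
        exact ⟨l1, l3, by simp⟩)
      have hch' : Chain' (Rnn σ) (l1 ++ x :: l3) := by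
        simp only [List.Chain'] at hch ⊢
        rw [List.isChain_append] at hch ⊢
        obtain ⟨hc1, hc2, hc3⟩ := hch
        rw [List.isChain_append] at hc1
        obtain ⟨hc1a, _, hc1c⟩ := hc1
        refine ⟨hc1a, hc2, ?_⟩
        · intro p hp q hq
          refine hc1c p hp q ?_
          simp at hq ⊢
          exact hq
      have hshort := ihn (l1 ++ x :: l3) (by simp at hW ⊢; omega) hch'
      have heq2 : walkWeight γ (l1 ++ x :: l3)
          = walkWeight γ (l1 ++ [x]) + walkWeight γ (x :: l3) :=
        walkWeight_append_cons γ x l1 l3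
      linarith

lemma cols_le : ∀ (E : List (List (Option σ))), (∀ c ∈ E, IsExtCol c) →
    E.length ≤ (E.filterMap hdc).length + (E.filterMap lsc).length
  | [], _ => le_refl 0
  | c :: E, h => by
    have ih := cols_le E (fun x hx => h x (List.mem_cons_of_mem _ hx))
    obtain ⟨hc0, _, _, hne⟩ := h c (List.mem_cons_self)
    rcases hh : hdc c with _ | a
    · rcases hl : lsc c with _ | b
      · exfalso
        refine hne ⟨?_, ?_⟩
        · rw [head?_eq_hdc hc0, hh]
        · rw [getLast?_eq_lsc hc0, hl]
      · simp only [List.filterMap_cons, hh, hl, List.length_cons]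
        omega
    · rcases hl : lsc c with _ | b <;>
        · simp only [List.filterMap_cons, hh, hl, List.length_cons]
          omega

lemma bddBelow_ScoreSet [Fintype σ] {γ : Scoring σ} (hC : ¬ NegCyc γ) (s u : List σ) :
    BddBelow (ScoreSet γ s u) := by
  obtain ⟨M, hM⟩ := Finite.exists_le (fun p : Option σ × Option σ => -(γ p.1 p.2))
  set M' := max M 0 with hM'
  have hM0 : (0:ℝ) ≤ M' := le_max_right _ _
  have hMg : ∀ p q : Option σ, -M' ≤ γ p q := by
    intro p q
    have := hM (p, q)
    simp only at this
    have : -γ p q ≤ M' := le_trans this (le_max_left _ _)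
    linarith
  set B := ((Fintype.card σ : ℝ) + 2) * M' with hB
  have hB0 : 0 ≤ B := by positivity
  refine ⟨-(((s.length : ℝ) + (u.length : ℝ)) * B), ?_⟩
  rintro x ⟨E, ⟨hcols, hsx, hux⟩, rfl⟩
  have hlen : E.length ≤ s.length + u.length := by
    have := cols_le E hcols
    rw [hsx, hux] at this
    exact this
  have hsum := sum_ge (E.map (walkWeight γ)) (fun x hx => by
    obtain ⟨c, hc, rfl⟩ := List.mem_map.mp hx
    exact walk_lb hC hM0 hMg c.length c le_rfl (hcols c hc).2.2.1)
  have hmul : ((E.map (walkWeight γ)).length : ℝ) * B ≤ ((s.length : ℝ) + (u.length : ℝ)) * B := by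
    apply mul_le_mul_of_nonneg_right _ hB0
    rw [List.length_map]
    exact_mod_cast hlen
  rw [← hB] at hsum
  linarith

lemma main_noC [Fintype σ] {γ : Scoring σ} (hC : ¬ NegCyc γ) (s t u : List σ) :
    edist γ s u ≤ edist γ s t + edist γ t u := by
  rw [edist_eq, edist_eq, edist_eq]
  have key : ∀ a ∈ ScoreSet γ s t, ∀ b ∈ ScoreSet γ t u, sInf (ScoreSet γ s u) ≤ a + b := by
    rintro a ⟨E₁, ⟨h1c, h1h, h1l⟩, rfl⟩ b ⟨E₂, ⟨h2c, h2h, h2l⟩, rfl⟩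
    obtain ⟨E, hE, hh, hl, hsum⟩ :=
      comp γ (E₁.length + E₂.length) E₁ E₂ le_rfl h1c h2c (by rw [h1l, h2h])
    obtain ⟨E', h1', h2', h3', h4'⟩ := drop_bad hC E hE
    have hmem : (E'.map (walkWeight γ)).sum ∈ ScoreSet γ s u :=
      ⟨E', ⟨h1', by rw [h2', hh, h1h], by rw [h3', hl, h2l]⟩, rfl⟩
    have := csInf_le (bddBelow_ScoreSet hC s u) hmem
    rw [hsum] at h4'
    linarith
  have h2 : sInf (ScoreSet γ s u) - sInf (ScoreSet γ t u) ≤ sInf (ScoreSet γ s t) := by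
    refine le_csInf (ScoreSet_nonempty γ s t) (fun a ha => ?_)
    have : sInf (ScoreSet γ s u) - a ≤ sInf (ScoreSet γ t u) :=
      le_csInf (ScoreSet_nonempty γ t u) (fun b hb => by have := key a ha b hb; linarith)
    linarith
  linarith

end Aux3

section Aux4
open List

variable {σ : Type*}

/-- `k`-fold repetition of a list. -/
def reps (D : List (Option σ)) : ℕ → List (Option σ)
  | 0 => []
  | n + 1 => D ++ reps D n

lemma head?_reps_append {z : Option σ} (v B : List (Option σ)) (hB : B.head? = some z) :
    ∀ k, (reps (z :: v) k ++ B).head? = some z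
  | 0 => by simpa [reps] using hB
  | k + 1 => by simp [reps]

lemma wW_reps (γ : Scoring σ) {z : Option σ} (v B A : List (Option σ)) (hB : B.head? = some z) :
    ∀ k, walkWeight γ (A ++ (reps (z :: v) k ++ B))
      = walkWeight γ (A ++ B) + k * walkWeight γ (z :: v ++ [z])
  | 0 => by simp [reps]
  | k + 1 => by
    have ih := wW_reps γ v B A hB k
    have hL : (reps (z :: v) k ++ B).head? = some z := head?_reps_append v B hB k
    set L := reps (z :: v) k ++ B with hLdef
    have hLc : z :: L.tail = L := List.cons_head?_tail hL
    have hassoc : reps (z :: v) (k + 1) ++ B = (z :: v) ++ L := by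
      rw [hLdef, reps, List.append_assoc]
    rw [hassoc]
    have h1 : A ++ ((z :: v) ++ L) = A ++ (z :: (v ++ L)) := by rw [List.cons_append]
    rw [h1, walkWeight_append_cons γ z A (v ++ L)]
    have h2 : z :: (v ++ L) = (z :: v) ++ L := by rw [List.cons_append]
    rw [h2]
    conv_lhs => rw [← hLc]
    rw [walkWeight_append_cons γ z (z :: v) L.tail, hLc]
    have h3 : walkWeight γ (A ++ L) = walkWeight γ (A ++ [z]) + walkWeight γ L := by
      conv_lhs => rw [← hLc]
      rw [walkWeight_append_cons γ z A L.tail, hLc]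
    rw [h3] at ih
    push_cast
    linarith

lemma chain_reps {z : Option σ} {v B : List (Option σ)} (hB : B.head? = some z)
    (hcyc : List.Chain' (Rnn σ) (z :: v ++ [z])) (hBc : List.Chain' (Rnn σ) B) :
    ∀ k, List.Chain' (Rnn σ) (reps (z :: v) k ++ B)
  | 0 => by simpa [reps] using hBc
  | k + 1 => by
    have ih := chain_reps hB hcyc hBc k
    show List.Chain' (Rnn σ) (((z :: v) ++ reps (z :: v) k) ++ B)
    rw [List.append_assoc]
    refine List.isChain_append.mpr ⟨?_, ih, ?_⟩
    · exact hcyc.prefix ⟨[z], rfl⟩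
    · intro p hp q hq
      rw [head?_reps_append v B hB k] at hq
      simp only [Option.mem_def, Option.some.injEq] at hq
      subst hq
      exact (List.isChain_append.mp hcyc).2.2 p hp _ (by simp)

lemma chain_A_reps {z : Option σ} {v B A : List (Option σ)} (hB : B.head? = some z)
    (hcyc : List.Chain' (Rnn σ) (z :: v ++ [z])) (hBc : List.Chain' (Rnn σ) B)
    (hA : List.Chain' (Rnn σ) (A ++ [z])) (k : ℕ) :
    List.Chain' (Rnn σ) (A ++ (reps (z :: v) k ++ B)) := by
  refine List.isChain_append.mpr
    ⟨(List.isChain_append.mp hA).1, chain_reps hB hcyc hBc k, ?_⟩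
  intro p hp q hq
  rw [head?_reps_append v B hB k] at hq
  simp only [Option.mem_def, Option.some.injEq] at hq
  subst hq
  exact (List.isChain_append.mp hA).2.2 p hp _ (by simp)

lemma unbdd_master {γ : Scoring σ} {z : Option σ} {v : List (Option σ)}
    (hch : List.Chain' (Rnn σ) (z :: v ++ [z])) (hneg : walkWeight γ (z :: v ++ [z]) < 0)
    (A B : List (Option σ)) (T : ℝ) (x y : List σ)
    (hB : B.head? = some z) (hBc : List.Chain' (Rnn σ) B)
    (hA : List.Chain' (Rnn σ) (A ++ [z]))
    (hsome : ∃ p ∈ A ++ B, p ≠ none)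
    (hnotbad : ¬(A.head?.or (some z) = some none ∧ B.getLast? = some none))
    (hmem : ∀ C : List (Option σ), IsExtCol C →
      C.head? = A.head?.or (some z) → C.getLast? = B.getLast? →
      walkWeight γ C + T ∈ ScoreSet γ x y) :
    ¬ BddBelow (ScoreSet γ x y) := by
  rw [not_bddBelow_iff]
  intro b
  set w := walkWeight γ (z :: v ++ [z]) with hw
  have hBne : B ≠ [] := by
    intro h
    rw [h] at hB
    simp at hB
  have hBl : B.getLast?.isSome = true := List.getLast?_isSome.mpr hBne
  have hh : ∀ k, (A ++ (reps (z :: v) k ++ B)).head? = A.head?.or (some z) := by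
    intro k
    rw [List.head?_append, head?_reps_append v B hB k]
  have hg : ∀ k, (A ++ (reps (z :: v) k ++ B)).getLast? = B.getLast? := by
    intro k
    rw [List.getLast?_append, List.getLast?_append, Option.or_of_isSome hBl,
      Option.or_of_isSome hBl]
  have hcol : ∀ k, IsExtCol (A ++ (reps (z :: v) k ++ B)) := by
    intro k
    refine ⟨?_, ?_, chain_A_reps hB hch hBc hA k, ?_⟩
    · simp [hBne]
    · obtain ⟨p, hp, hpn⟩ := hsome
      rcases List.mem_append.mp hp with h | h
      · exact ⟨p, List.mem_append_left _ h, hpn⟩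
      · exact ⟨p, List.mem_append_right _ (List.mem_append_right _ h), hpn⟩
    · rw [hh k, hg k]
      exact hnotbad
  have hval : ∀ k, walkWeight γ (A ++ (reps (z :: v) k ++ B))
      = walkWeight γ (A ++ B) + k * w := wW_reps γ v B A hB
  have hwpos : 0 < -w := by linarith
  obtain ⟨k, hk⟩ := exists_nat_gt ((walkWeight γ (A ++ B) + T - b) / (-w))
  have hk2 : walkWeight γ (A ++ B) + T - b < k * (-w) := (div_lt_iff₀ hwpos).mp hk
  have hk3 : (k : ℝ) * (-w) = -((k : ℝ) * w) := by ring
  refine ⟨walkWeight γ (A ++ (reps (z :: v) k ++ B)) + T,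
    hmem _ (hcol k) (hh k) (hg k), ?_⟩
  rw [hval k]
  linarith

lemma unbdd_of_negCyc {γ : Scoring σ} (h : NegCyc γ) (x y : List σ)
    (hxy : x ≠ [] ∨ y ≠ []) : ¬ BddBelow (ScoreSet γ x y) := by
  obtain ⟨z, v, hch, hneg⟩ := h
  rcases x with _ | ⟨x₀, x'⟩
  · -- x = [], so y ≠ []
    rcases y with _ | ⟨y₀, y'⟩
    · simp at hxy
    · -- column with head a space, last y₀
      have hmem : ∀ (A B : List (Option σ)), A.head?.or (some z) = some none →
          B.getLast? = some (some y₀) →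
          ∀ C : List (Option σ), IsExtCol C →
          C.head? = A.head?.or (some z) → C.getLast? = B.getLast? →
          walkWeight γ C + ((y'.map fun b => [none, some b]).map (walkWeight γ)).sum
            ∈ ScoreSet γ [] (y₀ :: y') := by
        intro A B hA0 hB0 C hCcol hCh hCl
        refine ⟨C :: y'.map fun b => [none, some b], ⟨?_, ?_, ?_⟩, ?_⟩
        · intro c hc
          rcases List.mem_cons.mp hc with rfl | hc
          · exact hCcol
          · obtain ⟨b, _, rfl⟩ := List.mem_map.mp hc
            exact isExtCol_right b
        · have h1 : C.head?.bind id = none := by rw [hCh, hA0]; rfl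
          simp only [List.filterMap_cons, h1]
          exact spell_right_hd y'
        · have h1 : C.getLast?.bind id = some y₀ := by rw [hCl, hB0]; rfl
          simp only [List.filterMap_cons, h1]
          rw [spell_right_ls y']
        · simp
      cases z with
      | none =>
        exact unbdd_master hch hneg [] [none, some y₀] _ [] (y₀ :: y') rfl
          (by simp [List.Chain', List.isChain_cons_cons, Rnn]) (by simp [List.Chain']) ⟨some y₀, by simp, by simp⟩
          (by simp) (hmem [] [none, some y₀] rfl rfl)
      | some a =>
        exact unbdd_master hch hneg [none] [some a, some y₀] _ [] (y₀ :: y') rfl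
          (by simp [List.Chain', List.isChain_cons_cons, Rnn]) (by simp [List.Chain', List.isChain_cons_cons, Rnn])
          ⟨some a, by simp, by simp⟩ (by simp) (hmem [none] [some a, some y₀] rfl rfl)
  · -- x = x₀ :: x'
    have hmem : ∀ (A B : List (Option σ)), A.head?.or (some z) = some (some x₀) →
        B.getLast? = some none →
        ∀ C : List (Option σ), IsExtCol C →
        C.head? = A.head?.or (some z) → C.getLast? = B.getLast? →
        walkWeight γ C + (((x'.map fun b => [some b, none])
            ++ y.map fun b => [none, some b]).map (walkWeight γ)).sum
          ∈ ScoreSet γ (x₀ :: x') y := by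
      intro A B hA0 hB0 C hCcol hCh hCl
      refine ⟨C :: ((x'.map fun b => [some b, none]) ++ y.map fun b => [none, some b]),
        ⟨?_, ?_, ?_⟩, ?_⟩
      · intro c hc
        rcases List.mem_cons.mp hc with rfl | hc
        · exact hCcol
        · rcases List.mem_append.mp hc with h | h <;> obtain ⟨b, _, rfl⟩ := List.mem_map.mp h
          · exact isExtCol_left b
          · exact isExtCol_right b
      · have h1 : C.head?.bind id = some x₀ := by rw [hCh, hA0]; rfl
        simp only [List.filterMap_cons, h1]
        rw [List.filterMap_append, spell_left_hd x', spell_right_hd y, List.append_nil]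
      · have h1 : C.getLast?.bind id = none := by rw [hCl, hB0]; rfl
        simp only [List.filterMap_cons, h1]
        rw [List.filterMap_append, spell_left_ls x', spell_right_ls y, List.nil_append]
      · simp
    cases z with
    | none =>
      exact unbdd_master hch hneg [some x₀] [none] _ (x₀ :: x') y rfl
        (by simp [List.Chain']) (by simp [List.Chain', List.isChain_cons_cons, Rnn]) ⟨some x₀, by simp, by simp⟩
        (by simp) (hmem [some x₀] [none] rfl rfl)
    | some a =>
      exact unbdd_master hch hneg [some x₀] [some a, none] _ (x₀ :: x') y rfl
        (by simp [List.Chain', List.isChain_cons_cons, Rnn]) (by simp [List.Chain', List.isChain_cons_cons, Rnn])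
        ⟨some x₀, by simp, by simp⟩ (by simp) (hmem [some x₀] [some a, none] rfl rfl)

lemma scoreset_nil_nil (γ : Scoring σ) : ScoreSet γ [] [] = {0} := by
  ext r
  simp only [Set.mem_singleton_iff]
  constructor
  · rintro ⟨E, ⟨hc, hh, hl⟩, rfl⟩
    cases E with
    | nil => simp
    | cons c E =>
      exfalso
      obtain ⟨hc0, _, _, hbad⟩ := hc c (List.mem_cons_self)
      have h1 : hdc c = none := (List.filterMap_eq_nil_iff.mp hh) c (List.mem_cons_self)
      have h2 : lsc c = none := (List.filterMap_eq_nil_iff.mp hl) c (List.mem_cons_self)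
      refine hbad ⟨?_, ?_⟩
      · rw [head?_eq_hdc hc0, h1]
      · rw [getLast?_eq_lsc hc0, h2]
  · rintro rfl
    exact ⟨[], ⟨by simp, rfl, rfl⟩, rfl⟩

lemma edist_zero_of_negCyc {γ : Scoring σ} (h : NegCyc γ) (x y : List σ) :
    edist γ x y = 0 := by
  rw [edist_eq]
  by_cases hxy : x = [] ∧ y = []
  · obtain ⟨rfl, rfl⟩ := hxy
    rw [scoreset_nil_nil]
    exact csInf_singleton 0
  · exact Real.sInf_of_not_bddBelow (unbdd_of_negCyc h x y (by tauto))

end Aux4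

/-- `f` is a premetric: `f x x = 0` and `f x y ≥ 0`. -/
def IsPremetric {σ : Type*} (f : List σ → List σ → ℝ) : Prop :=
  (∀ s, f s s = 0) ∧ (∀ s t, 0 ≤ f s t)

theorem stmt19 {σ : Type*} [Fintype σ] (γ : Scoring σ) (s t u : List σ) :
    edist γ s u ≤ edist γ s t + edist γ t u := by
  by_cases hC : NegCyc γ
  · rw [edist_zero_of_negCyc hC, edist_zero_of_negCyc hC, edist_zero_of_negCyc hC]
    norm_num
  · exact main_noC hC s t u
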